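/- arXiv:1601.06279 — 3 statements merged into one kernel-verified Lean document; each statement's English description precedes it below -/
import Mathlib

section
/- Let f : M → M be a continuous map on a compact metric space M. Every weak pseudo-physical measure μ is f-invariant. -/
open MeasureTheory Filter Topology
open scoped ENNReal

/-- The empiric probability measure `σ_n(x) = (1/n) ∑_{j<n} δ_{f^j(x)}`. -/
noncomputable def empiric {M : Type*} [MeasurableSpace M] (f : M → M) (x : M) (n : ℕ) :
    Measure M :=
  (n : ℝ≥0∞)⁻¹ • ∑ j ∈ Finset.range n, Measure.dirac (f^[j] x)

/-- `dstar` is a metric on the Borel probability measures on `M` inducing the weak* topology. -/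
structure IsWeakStarMetric (M : Type*) [MeasurableSpace M] [TopologicalSpace M]
    (dstar : Measure M → Measure M → ℝ) : Prop where
  nonneg : ∀ μ ν, 0 ≤ dstar μ ν
  symm : ∀ μ ν, dstar μ ν = dstar ν μ
  triangle : ∀ μ ν ρ, dstar μ ρ ≤ dstar μ ν + dstar ν ρ
  eq_zero_iff : ∀ μ ν : Measure M, IsProbabilityMeasure μ → IsProbabilityMeasure ν →
    (dstar μ ν = 0 ↔ μ = ν)
  tendsto_iff : ∀ (ν : ℕ → Measure M) (μ : Measure M),
    (∀ n, IsProbabilityMeasure (ν n)) → IsProbabilityMeasure μ →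
    (Tendsto (fun n => dstar (ν n) μ) atTop (𝓝 0) ↔
      ∀ g : C(M, ℝ), Tendsto (fun n => ∫ x, g x ∂(ν n)) atTop (𝓝 (∫ x, g x ∂μ)))

/-- The `ε`-pseudo basin of `μ` up to time `n`: `A_{ε,n}(μ) = {x : dist*(σ_n(x),μ) < ε}`. -/
def basinUpTo {M : Type*} [MeasurableSpace M] (f : M → M)
    (dstar : Measure M → Measure M → ℝ) (μ : Measure M) (ε : ℝ) (n : ℕ) : Set M :=
  {x | dstar (empiric f x n) μ < ε}

/-- The exponential rate `(1/n) log Leb(A n)`, valued in the extended reals. -/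
noncomputable def logRate {M : Type*} [MeasurableSpace M] (Leb : Measure M) (A : ℕ → Set M)
    (n : ℕ) : EReal :=
  ENNReal.log (Leb (A n)) * (((n : ℝ)⁻¹ : ℝ) : EReal)

/-- `μ` is weak pseudo-physical: `limsup_n (1/n) log Leb(A_{ε,n}(μ)) = 0` for all `ε > 0`. -/
def WeakPseudoPhysical {M : Type*} [MeasurableSpace M] (f : M → M)
    (dstar : Measure M → Measure M → ℝ) (Leb μ : Measure M) : Prop :=
  ∀ ε : ℝ, 0 < ε →
    Filter.atTop.limsup (logRate Leb (basinUpTo f dstar μ ε)) = 0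

lemma empiric_isProb {M : Type*} [MeasurableSpace M] (f : M → M) (x : M) {n : ℕ} (hn : 0 < n) :
    IsProbabilityMeasure (empiric f x n) := by
  constructor
  simp only [empiric, Measure.smul_apply, Measure.coe_finset_sum, Finset.sum_apply,
    Measure.dirac_apply_of_mem (Set.mem_univ _), Finset.sum_const, Finset.card_range,
    nsmul_eq_mul, mul_one, smul_eq_mul]
  exact ENNReal.inv_mul_cancel (by exact_mod_cast hn.ne') (ENNReal.natCast_ne_top n)

lemma integral_empiric {M : Type*} [MetricSpace M] [CompactSpace M] [MeasurableSpace M]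
    [BorelSpace M] (f : M → M) (x : M) (n : ℕ) (g : C(M, ℝ)) :
    ∫ y, g y ∂(empiric f x n) = (n : ℝ)⁻¹ * ∑ j ∈ Finset.range n, g (f^[j] x) := by
  rw [empiric, integral_smul_measure, integral_finset_sum_measure
    (fun j _ => by exact (BoundedContinuousFunction.mkOfCompact g).integrable (Measure.dirac (f^[j] x)))]
  simp [integral_dirac, ENNReal.toReal_inv, smul_eq_mul]

lemma step1 {M : Type*} [MeasurableSpace M] (f : M → M)
    (dstar : Measure M → Measure M → ℝ) (Leb μ : Measure M)
    (hwpp : WeakPseudoPhysical f dstar Leb μ) {ε : ℝ} (hε : 0 < ε) (N : ℕ) :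
    ∃ n, N + 1 ≤ n ∧ (basinUpTo f dstar μ ε n).Nonempty := by
  by_contra h
  push_neg at h
  have hev : ∀ᶠ n in atTop, logRate Leb (basinUpTo f dstar μ ε) n = (⊥ : EReal) := by
    filter_upwards [eventually_ge_atTop (N + 1)] with n hn
    have he : Leb (basinUpTo f dstar μ ε n) = 0 := by
      rw [h n hn]; simp
    have hpos : (0 : ℝ) < (n : ℝ)⁻¹ := by
      have : 0 < n := lt_of_lt_of_le (Nat.succ_pos N) hn
      positivity
    rw [logRate, he, ENNReal.log_zero]
    exact EReal.bot_mul_coe_of_pos hpos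
  have h0 := hwpp ε hε
  rw [limsup_congr hev, limsup_const] at h0
  exact absurd h0 (by simp)

/-- every weak pseudo-physical measure is `f`-invariant. -/
theorem stmt5 {M : Type*} [MetricSpace M] [CompactSpace M] [MeasurableSpace M] [BorelSpace M]
    (f : M → M) (hf : Continuous f)
    (Leb : Measure M) [IsProbabilityMeasure Leb]
    (hsupp : ∀ U : Set M, IsOpen U → U.Nonempty → 0 < Leb U)
    (dstar : Measure M → Measure M → ℝ) (hd : IsWeakStarMetric M dstar)
    (μ : Measure M) [IsProbabilityMeasure μ]
    (hwpp : WeakPseudoPhysical f dstar Leb μ) :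
    Measure.map f μ = μ := by
  -- choose points whose empirical measures converge to μ
  have key : ∀ k : ℕ, ∃ n, k + 1 ≤ n ∧ (basinUpTo f dstar μ (1 / ((k : ℝ) + 1)) n).Nonempty :=
    fun k => step1 f dstar Leb μ hwpp (by positivity) k
  choose n hn hne using key
  choose x hx using hne
  set ν : ℕ → Measure M := fun k => empiric f (x k) (n k) with hν
  have hnpos : ∀ k, 0 < n k := fun k => lt_of_lt_of_le (Nat.succ_pos k) (hn k)
  have hνprob : ∀ k, IsProbabilityMeasure (ν k) := fun k => empiric_isProb f (x k) (hnpos k)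
  have hdtend : Tendsto (fun k => dstar (ν k) μ) atTop (𝓝 0) := by
    refine squeeze_zero (fun k => hd.nonneg _ _) (fun k => le_of_lt (hx k))
      tendsto_one_div_add_atTop_nhds_zero_nat
  have hint := (hd.tendsto_iff ν μ hνprob inferInstance).mp hdtend
  -- the key invariance identity for continuous test functions
  have hkey : ∀ g : C(M, ℝ), ∫ y, g (f y) ∂μ = ∫ y, g y ∂μ := by
    intro g
    set gf : C(M, ℝ) := g.comp ⟨f, hf⟩ with hgf
    have h1 := hint g
    have h2 := hint gf
    set C := ‖BoundedContinuousFunction.mkOfCompact g‖ with hC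
    have hgb : ∀ y : M, |g y| ≤ C := fun y => by
      simpa [hC] using BoundedContinuousFunction.norm_coe_le_norm
        (BoundedContinuousFunction.mkOfCompact g) y
    have h3 : Tendsto (fun k => (∫ y, gf y ∂(ν k)) - ∫ y, g y ∂(ν k)) atTop (𝓝 0) := by
      have hb : Tendsto (fun k : ℕ => (1 / ((k : ℝ) + 1)) * (2 * C)) atTop (𝓝 0) := by
        simpa using tendsto_one_div_add_atTop_nhds_zero_nat.mul_const (2 * C)
      refine squeeze_zero_norm (fun k => ?_) hb
      have hdiff : (∫ y, gf y ∂(ν k)) - ∫ y, g y ∂(ν k)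
          = ((n k : ℝ))⁻¹ * (g (f^[n k] (x k)) - g (x k)) := by
        rw [hν, integral_empiric f (x k) (n k) gf, integral_empiric f (x k) (n k) g,
          ← mul_sub, ← Finset.sum_sub_distrib]
        congr 1
        have : ∀ j ∈ Finset.range (n k), gf (f^[j] (x k)) - g (f^[j] (x k))
            = g (f^[j+1] (x k)) - g (f^[j] (x k)) := by
          intro j _
          simp [hgf, Function.iterate_succ_apply']
        rw [Finset.sum_congr rfl this, Finset.sum_range_sub (fun j => g (f^[j] (x k)))]
        simp
      rw [hdiff]
      have h1' : ((n k : ℝ))⁻¹ ≤ 1 / ((k : ℝ) + 1) := by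
        rw [one_div]
        apply inv_anti₀ (by positivity)
        exact_mod_cast hn k
      have h2' : |g (f^[n k] (x k)) - g (x k)| ≤ 2 * C := by
        calc |g (f^[n k] (x k)) - g (x k)| ≤ |g (f^[n k] (x k))| + |g (x k)| := abs_sub _ _
        _ ≤ C + C := add_le_add (hgb _) (hgb _)
        _ = 2 * C := by ring
      calc ‖((n k : ℝ))⁻¹ * (g (f^[n k] (x k)) - g (x k))‖
          = ((n k : ℝ))⁻¹ * |g (f^[n k] (x k)) - g (x k)| := by
            rw [Real.norm_eq_abs, abs_mul, abs_of_nonneg (by positivity)]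
        _ ≤ (1 / ((k : ℝ) + 1)) * (2 * C) :=
            mul_le_mul h1' h2' (abs_nonneg _) (by positivity)
    have htend : Tendsto (fun k => ∫ y, gf y ∂(ν k)) atTop (𝓝 (∫ y, g y ∂μ)) := by
      have := h3.add h1
      simpa using this
    have heq : ∫ y, gf y ∂μ = ∫ y, g y ∂μ := tendsto_nhds_unique h2 htend
    simpa [hgf] using heq
  -- conclude equality of measures via lintegrals of bounded continuous functions
  have hfm : Measurable f := hf.measurable
  have hmapprob : IsProbabilityMeasure (Measure.map f μ) :=
    Measure.isProbabilityMeasure_map hfm.aemeasurable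
  apply MeasureTheory.ext_of_forall_lintegral_eq_of_IsFiniteMeasure
  intro g
  have hgc : Continuous fun y => (g y : ℝ) := NNReal.continuous_coe.comp g.continuous
  set gr : C(M, ℝ) := ⟨fun y => (g y : ℝ), hgc⟩ with hgr
  have hint1 : Integrable (fun y => (g y : ℝ)) μ := by
    exact (BoundedContinuousFunction.mkOfCompact gr).integrable μ
  have hint2 : Integrable (fun y => (g (f y) : ℝ)) μ := by
    exact
      (BoundedContinuousFunction.mkOfCompact (gr.comp ⟨f, hf⟩)).integrable μ
  rw [lintegral_map (g.continuous.measurable.coe_nnreal_ennreal) hfm,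
    lintegral_coe_eq_integral _ hint2, lintegral_coe_eq_integral _ hint1]
  congr 1
  exact hkey gr
end

section
/- Let f : M → M be a continuous map on a compact metric space M. The set P_f of weak pseudo-physical measures is closed in the weak* topology; in particular it is weak*-compact. -/
open MeasureTheory Filter Topology
open scoped ENNReal

section AuxLemmas
set_option linter.unusedSectionVars false
open TopologicalSpace
open scoped NNReal

lemma logRate_nonpos {M : Type*} [MeasurableSpace M] (Leb : Measure M) [IsProbabilityMeasure Leb]
    (A : ℕ → Set M) (n : ℕ) : logRate Leb A n ≤ 0 := by
  apply mul_nonpos_of_nonpos_of_nonneg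
  · exact ENNReal.log_le_zero_iff.mpr prob_le_one
  · exact EReal.coe_nonneg.mpr (by positivity)

lemma logRate_mono {M : Type*} [MeasurableSpace M] (Leb : Measure M) {A B : ℕ → Set M} (n : ℕ)
    (h : A n ⊆ B n) : logRate Leb A n ≤ logRate Leb B n := by
  apply mul_le_mul_of_nonneg_right
  · exact ENNReal.log_monotone (measure_mono h)
  · exact EReal.coe_nonneg.mpr (by positivity)

section Aux

variable {M : Type*} [MetricSpace M] [CompactSpace M]

def ballUnion (u : ℕ → M) (s : Finset (ℕ × ℚ)) : Set M :=
  ⋃ p ∈ s, Metric.ball (u p.1) (p.2 : ℝ)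

lemma isOpen_ballUnion (u : ℕ → M) (s : Finset (ℕ × ℚ)) : IsOpen (ballUnion u s) :=
  isOpen_biUnion fun _ _ => Metric.isOpen_ball

lemma ballUnion_union (u : ℕ → M) (s t : Finset (ℕ × ℚ)) :
    ballUnion u (s ∪ t) = ballUnion u s ∪ ballUnion u t := by
  rw [ballUnion, Finset.set_biUnion_union]; rfl

lemma keyCover {u : ℕ → M} (hu : DenseRange u) {K U : Set M} (hK : IsCompact K)
    (hU : IsOpen U) (hKU : K ⊆ U) :
    ∃ s : Finset (ℕ × ℚ), K ⊆ ballUnion u s ∧ ballUnion u s ⊆ U := by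
  have hball : ∀ x : K, ∃ p : ℕ × ℚ,
      (x : M) ∈ Metric.ball (u p.1) (p.2 : ℝ) ∧ Metric.ball (u p.1) (p.2 : ℝ) ⊆ U := by
    rintro ⟨x, hx⟩
    obtain ⟨r, hr0, hrU⟩ := Metric.isOpen_iff.mp hU x (hKU hx)
    obtain ⟨i, hi⟩ := Metric.denseRange_iff.mp hu x (r / 4) (by positivity)
    obtain ⟨q, hq1, hq2⟩ := exists_rat_btwn (show (r / 4 : ℝ) < r / 2 by linarith)
    refine ⟨(i, q), Metric.mem_ball.mpr (lt_trans hi hq1), fun y hy => hrU ?_⟩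
    have h1 : dist y (u i) < (q : ℝ) := Metric.mem_ball.mp hy
    have h2 : dist (u i) x < r / 4 := by rwa [dist_comm] at hi
    have : dist y x < r := by
      calc dist y x ≤ dist y (u i) + dist (u i) x := dist_triangle _ _ _
        _ < q + r / 4 := by linarith
        _ < r := by linarith
    exact Metric.mem_ball.mpr this
  choose P hP1 hP2 using hball
  obtain ⟨t, ht⟩ := hK.elim_finite_subcover (fun x : K => Metric.ball (u (P x).1) ((P x).2 : ℝ))
    (fun _ => Metric.isOpen_ball) (fun x hx => Set.mem_iUnion.mpr ⟨⟨x, hx⟩, hP1 ⟨x, hx⟩⟩)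
  refine ⟨t.image P, ?_, ?_⟩
  · intro x hx
    obtain ⟨y, hyt, hxy⟩ := Set.mem_iUnion₂.mp (ht hx)
    exact Set.mem_biUnion (Finset.mem_image_of_mem P hyt) hxy
  · intro x hx
    obtain ⟨p, hp, hxp⟩ := Set.mem_iUnion₂.mp hx
    obtain ⟨y, _, rfl⟩ := Finset.mem_image.mp hp
    exact hP2 y hxp

lemma exists_ballUnion_univ {u : ℕ → M} (hu : DenseRange u) :
    ∃ s : Finset (ℕ × ℚ), ballUnion u s = Set.univ := by
  obtain ⟨s, hs1, _⟩ := keyCover hu isCompact_univ isOpen_univ (le_refl _)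
  exact ⟨s, Set.eq_univ_of_univ_subset hs1⟩

variable [MeasurableSpace M] [BorelSpace M] [Nonempty M]

/-- Sequential compactness of the space of Borel probability measures on a compact
metric space (a special case of Prokhorov's theorem), proved from scratch. -/
theorem prob_exists_tendsto_subseq (μs : ℕ → ProbabilityMeasure M) :
    ∃ ν : ProbabilityMeasure M, ∃ φ : ℕ → ℕ, StrictMono φ ∧
      Tendsto (fun k => μs (φ k)) atTop (𝓝 ν) := by
  set u : ℕ → M := denseSeq M with hu_def
  have hu : DenseRange u := denseRange_denseSeq M
  -- the sequence of evaluation functions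
  set g : ℕ → (Finset (ℕ × ℚ) → ℝ) := fun k s => ((μs k (ballUnion u s) : ℝ≥0) : ℝ) with hg_def
  have hgK : ∀ k, g k ∈ Set.pi Set.univ (fun _ : Finset (ℕ × ℚ) => Set.Icc (0 : ℝ) 1) := by
    intro k s _
    exact ⟨(μs k (ballUnion u s)).coe_nonneg,
      by exact_mod_cast (μs k).apply_le_one (ballUnion u s)⟩
  obtain ⟨a, haK, φ, hφ, hconv⟩ :=
    (isCompact_univ_pi (fun _ : Finset (ℕ × ℚ) => isCompact_Icc)).tendsto_subseq hgK
  have hper : ∀ s, Tendsto (fun k => g (φ k) s) atTop (𝓝 (a s)) := fun s =>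
    tendsto_pi_nhds.mp hconv s
  have ha0 : ∀ s, 0 ≤ a s := fun s => (haK s (Set.mem_univ _)).1
  -- limit values as nonnegative reals
  set w : Finset (ℕ × ℚ) → ℝ≥0 := fun s => ⟨a s, ha0 s⟩ with hw_def
  have hperNN : ∀ s, Tendsto (fun k => μs (φ k) (ballUnion u s)) atTop (𝓝 (w s)) := by
    intro s
    rw [← NNReal.tendsto_coe]
    exact hper s
  -- monotonicity and additivity of the limit values
  have hwmono : ∀ s t, ballUnion u s ⊆ ballUnion u t → w s ≤ w t := by
    intro s t hst
    exact le_of_tendsto_of_tendsto' (hperNN s) (hperNN t)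
      (fun k => (μs (φ k)).apply_mono hst)
  have hwadd : ∀ s t, Disjoint (ballUnion u s) (ballUnion u t) → w (s ∪ t) = w s + w t := by
    intro s t hdisj
    refine tendsto_nhds_unique (hperNN (s ∪ t)) ?_
    have heq : ∀ k, μs (φ k) (ballUnion u (s ∪ t))
        = μs (φ k) (ballUnion u s) + μs (φ k) (ballUnion u t) := by
      intro k
      apply ENNReal.coe_injective
      push_cast [ProbabilityMeasure.ennreal_coeFn_eq_coeFn_toMeasure]
      rw [ballUnion_union]
      exact measure_union hdisj (isOpen_ballUnion u t).measurableSet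
    simp_rw [heq]
    exact ((hperNN s).add (hperNN t))
  have hwuniv : ∀ s, ballUnion u s = Set.univ → w s = 1 := by
    intro s hs
    refine tendsto_nhds_unique (hperNN s) ?_
    have : ∀ k, μs (φ k) (ballUnion u s) = 1 := by
      intro k; rw [hs]; exact (μs (φ k)).coeFn_univ
    simp_rw [this]
    exact tendsto_const_nhds
  -- subadditivity of the limit values
  have hwsub : ∀ s t, w (s ∪ t) ≤ w s + w t := by
    intro s t
    refine le_of_tendsto_of_tendsto' (hperNN (s ∪ t)) ((hperNN s).add (hperNN t)) ?_
    intro k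
    rw [← ENNReal.coe_le_coe]
    push_cast [ProbabilityMeasure.ennreal_coeFn_eq_coeFn_toMeasure]
    rw [ballUnion_union]
    exact measure_union_le _ _
  -- the content associated to the limit values
  obtain ⟨sU, hsU⟩ := exists_ballUnion_univ hu
  set lam : TopologicalSpace.Compacts M → ℝ≥0 :=
    fun K => sInf (w '' {s | (K : Set M) ⊆ ballUnion u s}) with hlam_def
  have hne : ∀ K : TopologicalSpace.Compacts M,
      (w '' {s | (K : Set M) ⊆ ballUnion u s}).Nonempty := by
    intro K
    exact ⟨w sU, sU, by rw [Set.mem_setOf_eq, hsU]; exact Set.subset_univ _, rfl⟩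
  have hlam_le : ∀ (K : TopologicalSpace.Compacts M) {s : Finset (ℕ × ℚ)},
      (K : Set M) ⊆ ballUnion u s → lam K ≤ w s := by
    intro K s hs
    exact csInf_le (OrderBot.bddBelow _) ⟨s, hs, rfl⟩
  have hmono : ∀ K₁ K₂ : TopologicalSpace.Compacts M, (K₁ : Set M) ⊆ K₂ → lam K₁ ≤ lam K₂ := by
    intro K₁ K₂ h
    exact csInf_le_csInf (OrderBot.bddBelow _) (hne K₂)
      (Set.image_mono fun s hs => Set.Subset.trans h hs)
  have hsup_le : ∀ K₁ K₂ : TopologicalSpace.Compacts M, lam (K₁ ⊔ K₂) ≤ lam K₁ + lam K₂ := by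
    intro K₁ K₂
    apply _root_.le_of_forall_pos_le_add
    intro ε hε
    obtain ⟨x₁, hx₁mem, hx₁⟩ := exists_lt_of_csInf_lt (hne K₁)
      (lt_add_of_pos_right (lam K₁) (half_pos hε))
    obtain ⟨x₂, hx₂mem, hx₂⟩ := exists_lt_of_csInf_lt (hne K₂)
      (lt_add_of_pos_right (lam K₂) (half_pos hε))
    obtain ⟨s₁, hs₁, rfl⟩ := hx₁mem
    obtain ⟨s₂, hs₂, rfl⟩ := hx₂mem
    have hsub : ((K₁ ⊔ K₂ : TopologicalSpace.Compacts M) : Set M) ⊆ ballUnion u (s₁ ∪ s₂) := by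
      rw [TopologicalSpace.Compacts.coe_sup, ballUnion_union]
      exact Set.union_subset_union hs₁ hs₂
    calc lam (K₁ ⊔ K₂) ≤ w (s₁ ∪ s₂) := hlam_le _ hsub
      _ ≤ w s₁ + w s₂ := hwsub s₁ s₂
      _ ≤ (lam K₁ + ε / 2) + (lam K₂ + ε / 2) := add_le_add hx₁.le hx₂.le
      _ = lam K₁ + lam K₂ + ε := by rw [add_add_add_comm, add_halves]
  have hsup_disj : ∀ K₁ K₂ : TopologicalSpace.Compacts M, Disjoint (K₁ : Set M) K₂ →
      lam (K₁ ⊔ K₂) = lam K₁ + lam K₂ := by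
    intro K₁ K₂ hdisj
    refine le_antisymm (hsup_le K₁ K₂) (le_csInf (hne _) ?_)
    rintro x ⟨s, hs, rfl⟩
    rw [Set.mem_setOf_eq, TopologicalSpace.Compacts.coe_sup] at hs
    obtain ⟨O₁, O₂, hO₁, hO₂, hKO₁, hKO₂, hOdisj⟩ :=
      NormalSpace.normal (K₁ : Set M) (K₂ : Set M)
        K₁.isCompact.isClosed K₂.isCompact.isClosed hdisj
    obtain ⟨s₁, hKs₁, hs₁O⟩ := keyCover hu K₁.isCompact (hO₁.inter (isOpen_ballUnion u s))
      (Set.subset_inter hKO₁ (Set.subset_union_left.trans hs))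
    obtain ⟨s₂, hKs₂, hs₂O⟩ := keyCover hu K₂.isCompact (hO₂.inter (isOpen_ballUnion u s))
      (Set.subset_inter hKO₂ (Set.subset_union_right.trans hs))
    have hVdisj : Disjoint (ballUnion u s₁) (ballUnion u s₂) :=
      hOdisj.mono (hs₁O.trans Set.inter_subset_left) (hs₂O.trans Set.inter_subset_left)
    calc lam K₁ + lam K₂ ≤ w s₁ + w s₂ := add_le_add (hlam_le _ hKs₁) (hlam_le _ hKs₂)
      _ = w (s₁ ∪ s₂) := (hwadd s₁ s₂ hVdisj).symm
      _ ≤ w s := hwmono _ _ (by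
          rw [ballUnion_union]
          exact Set.union_subset (hs₁O.trans Set.inter_subset_right)
            (hs₂O.trans Set.inter_subset_right))
  set Λ : Content M := ⟨lam, hmono, fun K₁ K₂ h _ _ => hsup_disj K₁ K₂ h, hsup_le⟩ with hΛ_def
  -- the limit measure
  have hΛ_apply : ∀ K : TopologicalSpace.Compacts M, Λ K = (lam K : ℝ≥0∞) := fun _ => rfl
  have hlam_univ : lam ⟨Set.univ, isCompact_univ⟩ = 1 := by
    apply le_antisymm
    · calc lam ⟨Set.univ, isCompact_univ⟩ ≤ w sU := hlam_le _ (by rw [hsU]; exact Set.subset_univ _)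
        _ = 1 := hwuniv sU hsU
    · refine le_csInf (hne _) ?_
      rintro x ⟨s, hs, rfl⟩
      rw [hwuniv s (Set.eq_univ_of_univ_subset hs)]
  have hν_univ : Λ.measure Set.univ = 1 := by
    rw [Λ.measure_apply MeasurableSet.univ]
    have h1 : Λ.outerMeasure (Set.univ : Set M)
        = Λ.innerContent ⟨Set.univ, isOpen_univ⟩ := Λ.outerMeasure_opens ⟨Set.univ, isOpen_univ⟩
    rw [h1, Λ.innerContent_of_isCompact isCompact_univ isOpen_univ, hΛ_apply, hlam_univ]
    rfl
  have hνprob : IsProbabilityMeasure Λ.measure := ⟨hν_univ⟩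
  set νb : ProbabilityMeasure M := ⟨Λ.measure, hνprob⟩ with hνb_def
  -- the open-sets liminf bound
  have h_opens : ∀ G : Set M, IsOpen G → νb G ≤ atTop.liminf (fun k => μs (φ k) G) := by
    intro G hG
    set c : ℝ≥0 := atTop.liminf (fun k => μs (φ k) G) with hc_def
    have hbound : Λ.measure G ≤ (c : ℝ≥0∞) := by
      rw [Λ.measure_apply hG.measurableSet,
        Λ.outerMeasure_of_isOpen G hG, Content.innerContent]
      refine iSup₂_le ?_
      intro K hKG
      rw [hΛ_apply, ENNReal.coe_le_coe]
      obtain ⟨s, hKs, hsG⟩ := keyCover hu K.isCompact hG hKG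
      refine (hlam_le K hKs).trans ?_
      have hws : w s = atTop.liminf (fun k => μs (φ k) (ballUnion u s)) :=
        ((hperNN s).liminf_eq).symm
      rw [hws]
      refine Filter.liminf_le_liminf (Filter.Eventually.of_forall
        (fun k => (μs (φ k)).apply_mono hsG)) ?_ ?_
      · exact Filter.isBoundedUnder_of ⟨0, fun k => zero_le⟩
      · exact (Filter.isBoundedUnder_of
          ⟨1, fun k => (μs (φ k)).apply_le_one _⟩).isCoboundedUnder_ge
    have hcoe : (νb G : ℝ≥0∞) = Λ.measure G :=
      ProbabilityMeasure.ennreal_coeFn_eq_coeFn_toMeasure νb G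
    rw [← ENNReal.coe_le_coe, hcoe]
    exact hbound
  exact ⟨νb, φ, hφ, MeasureTheory.tendsto_of_forall_isOpen_le_liminf h_opens⟩


lemma isSeqClosed_wpp {M : Type*} [MetricSpace M] [CompactSpace M] [MeasurableSpace M]
    [BorelSpace M] (f : M → M) (Leb : Measure M) [IsProbabilityMeasure Leb]
    (dstar : Measure M → Measure M → ℝ) (hd : IsWeakStarMetric M dstar) :
    IsSeqClosed {μ : ProbabilityMeasure M | WeakPseudoPhysical f dstar Leb (μ : Measure M)} := by
  intro μs μ hmem htend
  intro ε hε
  have hdist : Tendsto (fun j => dstar (μs j : Measure M) (μ : Measure M)) atTop (𝓝 0) := by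
    rw [hd.tendsto_iff (fun j => (μs j : Measure M)) (μ : Measure M)
      (fun j => (μs j).prop) μ.prop]
    intro g
    have h := ProbabilityMeasure.tendsto_iff_forall_integral_tendsto.mp htend
      (BoundedContinuousFunction.mkOfCompact g)
    simpa [BoundedContinuousFunction.mkOfCompact_apply] using h
  obtain ⟨j, hj⟩ : ∃ j, dstar (μs j : Measure M) (μ : Measure M) < ε / 2 :=
    (hdist.eventually_lt_const (half_pos hε)).exists
  have hsub : ∀ n, basinUpTo f dstar (μs j : Measure M) (ε / 2) n
      ⊆ basinUpTo f dstar (μ : Measure M) ε n := by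
    intro n x hx
    have htri : dstar (empiric f x n) (μ : Measure M)
        ≤ dstar (empiric f x n) (μs j : Measure M) + dstar (μs j : Measure M) (μ : Measure M) :=
      hd.triangle _ _ _
    have hx' : dstar (empiric f x n) (μs j : Measure M) < ε / 2 := hx
    simp only [basinUpTo, Set.mem_setOf_eq]
    linarith
  apply le_antisymm
  · exact Filter.limsup_le_of_le
      (h := Filter.Eventually.of_forall (fun n => logRate_nonpos Leb _ n))
  · calc (0 : EReal)
        = Filter.atTop.limsup (logRate Leb (basinUpTo f dstar (μs j : Measure M) (ε / 2))) :=
          (hmem j (ε / 2) (half_pos hε)).symm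
      _ ≤ Filter.atTop.limsup (logRate Leb (basinUpTo f dstar (μ : Measure M) ε)) :=
          Filter.limsup_le_limsup
            (Filter.Eventually.of_forall fun n => logRate_mono Leb n (hsub n))

end Aux

end AuxLemmas

/-- the set of weak pseudo-physical measures is weak*-closed, and in
particular weak*-compact. -/
theorem stmt6 {M : Type*} [MetricSpace M] [CompactSpace M] [MeasurableSpace M] [BorelSpace M]
    (f : M → M) (hf : Continuous f)
    (Leb : Measure M) [IsProbabilityMeasure Leb]
    (dstar : Measure M → Measure M → ℝ) (hd : IsWeakStarMetric M dstar) :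
    IsClosed {μ : ProbabilityMeasure M |
        WeakPseudoPhysical f dstar Leb (μ : Measure M)} ∧
      IsCompact {μ : ProbabilityMeasure M |
        WeakPseudoPhysical f dstar Leb (μ : Measure M)} := by
  have hne : Nonempty M := by
    by_contra h
    rw [not_nonempty_iff] at h
    have h1 : Leb Set.univ = 1 := measure_univ
    rw [Set.univ_eq_empty_iff.mpr h, measure_empty] at h1
    exact zero_ne_one h1
  have hseq : IsSeqClosed {μ : ProbabilityMeasure M | WeakPseudoPhysical f dstar Leb ↑μ} :=
    isSeqClosed_wpp f Leb dstar hd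
  refine ⟨hseq.isClosed, ?_⟩
  letI : MetricSpace (ProbabilityMeasure M) := TopologicalSpace.metrizableSpaceMetric _
  apply IsSeqCompact.isCompact
  intro x hx
  obtain ⟨ν, φ, hφ, hten⟩ := prob_exists_tendsto_subseq x
  exact ⟨ν, hseq (fun k => hx (φ k)) hten, φ, hφ, hten⟩
end

section
/- Let (X, μ) be a probability space and P a finite measurable partition of X. Suppose A ⊆ X is measurable with μ(A) > 1 − ε for some 0 < ε < 1/4, and let P_A := {Y ∈ P : Y ∩ A ≠ ∅}. Then the Shannon entropy H(P, μ) := −∑_{Y∈P} μ(Y) log μ(Y) satisfies H(P, μ) ≤ log #P_A + ε · log #P − ε log ε − (1−ε) log(1−ε). -/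
open MeasureTheory

lemma aux_sum_negMulLog_le {ι : Type*} (s : Finset ι) (p : ι → ℝ) (hp : ∀ i ∈ s, 0 ≤ p i) :
    ∑ i ∈ s, Real.negMulLog (p i) ≤
      Real.negMulLog (∑ i ∈ s, p i) + (∑ i ∈ s, p i) * Real.log s.card := by
  rcases s.eq_empty_or_nonempty with rfl | hs
  · simp
  set t := ∑ i ∈ s, p i with ht
  have ht0 : 0 ≤ t := Finset.sum_nonneg hp
  have hn : (0:ℝ) < s.card := by exact_mod_cast Finset.card_pos.mpr hs
  rcases eq_or_lt_of_le ht0 with heq | htpos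
  · have hz : ∀ i ∈ s, p i = 0 := by
      intro i hi
      have := (Finset.sum_eq_zero_iff_of_nonneg hp).mp heq.symm
      exact this i hi
    have : ∑ i ∈ s, Real.negMulLog (p i) = 0 := by
      apply Finset.sum_eq_zero
      intro i hi; rw [hz i hi]; simp
    rw [this, ← heq]; simp
  have hjensen := Real.concaveOn_negMulLog.le_map_sum (t := s)
    (w := fun _ => (s.card : ℝ)⁻¹) (p := p)
    (fun i _ => by positivity)
    (by rw [Finset.sum_const, nsmul_eq_mul]; exact mul_inv_cancel₀ (ne_of_gt hn))
    (fun i hi => hp i hi)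
  have hrhs : (∑ i ∈ s, (s.card : ℝ)⁻¹ • p i) = t / s.card := by
    simp only [smul_eq_mul, div_eq_mul_inv, mul_comm, ht, ← Finset.sum_mul]
  rw [hrhs] at hjensen
  have hlog : Real.negMulLog (t / s.card) = (t / s.card) * (Real.log s.card - Real.log t) := by
    rw [Real.negMulLog, Real.log_div (ne_of_gt htpos) (ne_of_gt hn)]
    ring
  have := mul_le_mul_of_nonneg_left hjensen (le_of_lt hn)
  rw [Finset.mul_sum] at this
  calc ∑ i ∈ s, Real.negMulLog (p i)
      = ∑ i ∈ s, (s.card : ℝ) * ((s.card : ℝ)⁻¹ • Real.negMulLog (p i)) := by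
        apply Finset.sum_congr rfl; intro i _; rw [smul_eq_mul]; field_simp
    _ ≤ (s.card : ℝ) * Real.negMulLog (t / s.card) := this
    _ = Real.negMulLog t + t * Real.log s.card := by
        rw [hlog, Real.negMulLog]; field_simp; ring

/-- entropy-counting lemma. If `μ(A) > 1 − ε` with `0 < ε < 1/4`, then the
Shannon entropy of a finite partition `P` is bounded by `log #{Y ∈ P : Y ∩ A ≠ ∅}`
plus `ε log #P − ε log ε − (1−ε) log(1−ε)`. -/
theorem stmt13 {X : Type*} [MeasurableSpace X] (μ : Measure X) [IsProbabilityMeasure μ]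
    {ι : Type*} [Fintype ι] (P : ι → Set X)
    (hmeas : ∀ i, MeasurableSet (P i))
    (hdisj : Pairwise (Function.onFun Disjoint P))
    (hcover : (⋃ i, P i) = Set.univ)
    (A : Set X) (hA : MeasurableSet A)
    (ε : ℝ) (hε0 : 0 < ε) (hε4 : ε < 1 / 4)
    (hAbig : 1 - ε < (μ A).toReal) :
    ∑ i, Real.negMulLog ((μ (P i)).toReal) ≤
      Real.log (Nat.card {i : ι // (P i ∩ A).Nonempty})
        + ε * Real.log (Fintype.card ι)
        - ε * Real.log ε - (1 - ε) * Real.log (1 - ε) := by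
  classical
  set p : ι → ℝ := fun i => (μ (P i)).toReal with hpdef
  have hpnn : ∀ i, 0 ≤ p i := fun i => ENNReal.toReal_nonneg
  have hsum1 : ∑ i, p i = 1 := by
    have h1 : ∑ i, μ (P i) = 1 := by
      rw [← tsum_fintype (L := .unconditional _), ← measure_iUnion hdisj hmeas, hcover, measure_univ]
    have h2 := congrArg ENNReal.toReal h1
    rwa [ENNReal.toReal_sum (fun i _ => measure_ne_top μ _), ENNReal.toReal_one] at h2
  set S : Finset ι := Finset.univ.filter (fun i => (P i ∩ A).Nonempty) with hSdef
  -- number of elements in subtype = S.card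
  have hScard : (Nat.card {i : ι // (P i ∩ A).Nonempty} : ℝ) = (S.card : ℝ) := by
    rw [Nat.card_eq_fintype_card, Fintype.card_subtype]
  -- S is nonempty
  have hμA : μ A ≠ 0 := by
    intro h
    rw [h] at hAbig
    simp at hAbig
    linarith
  have hSne : S.Nonempty := by
    obtain ⟨x, hx⟩ := nonempty_of_measure_ne_zero hμA
    have : x ∈ ⋃ i, P i := by rw [hcover]; trivial
    obtain ⟨i, hi⟩ := Set.mem_iUnion.mp this
    exact ⟨i, Finset.mem_filter.mpr ⟨Finset.mem_univ _, ⟨x, hi, hx⟩⟩⟩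
  have hιne : Nonempty ι := ⟨hSne.choose⟩
  set b : ℝ := ∑ i ∈ Sᶜ, p i with hbdef
  set a : ℝ := ∑ i ∈ S, p i with hadef
  have hab : a + b = 1 := by rw [hadef, hbdef, Finset.sum_add_sum_compl, hsum1]
  have hb0 : 0 ≤ b := Finset.sum_nonneg fun i _ => hpnn i
  have ha0 : 0 ≤ a := Finset.sum_nonneg fun i _ => hpnn i
  -- b < ε
  have hbε : b < ε := by
    have hsub : ∀ i ∈ Sᶜ, P i ⊆ Aᶜ := by
      intro i hi x hx hxA
      exact (Finset.mem_compl.mp hi) (Finset.mem_filter.mpr ⟨Finset.mem_univ _, ⟨x, hx, hxA⟩⟩)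
    have hμb : ∑ i ∈ Sᶜ, μ (P i) ≤ μ Aᶜ := by
      rw [← measure_biUnion_finset (hdisj.set_pairwise _) (fun i _ => hmeas i)]
      exact measure_mono (Set.iUnion₂_subset hsub)
    have hcompl : (μ Aᶜ).toReal = 1 - (μ A).toReal := by
      rw [measure_compl hA (measure_ne_top μ A), measure_univ,
        ENNReal.toReal_sub_of_le prob_le_one ENNReal.one_ne_top, ENNReal.toReal_one]
    have hble : b ≤ (μ Aᶜ).toReal := by
      rw [hbdef]
      have := ENNReal.toReal_mono (measure_ne_top μ Aᶜ) hμb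
      rwa [ENNReal.toReal_sum (fun i _ => measure_ne_top μ _)] at this
    rw [hcompl] at hble
    linarith
  have hlogS : 0 ≤ Real.log S.card := Real.log_natCast_nonneg _
  have hlogSc : 0 ≤ Real.log (Sᶜ.card) := Real.log_natCast_nonneg _
  have hlogι : 0 ≤ Real.log (Fintype.card ι) := Real.log_natCast_nonneg _
  have hlogle : Real.log (Sᶜ.card) ≤ Real.log (Fintype.card ι) := by
    rcases Nat.eq_zero_or_pos (Sᶜ.card) with h | h
    · rw [h]; simpa using hlogι
    · apply Real.log_le_log (by exact_mod_cast h)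
      exact_mod_cast (Finset.card_le_univ Sᶜ).trans_eq Finset.card_univ
  -- entropy pieces
  have hS := aux_sum_negMulLog_le S p (fun i _ => hpnn i)
  have hSc := aux_sum_negMulLog_le Sᶜ p (fun i _ => hpnn i)
  rw [← hadef] at hS
  rw [← hbdef] at hSc
  have hsplit : ∑ i, Real.negMulLog (p i) =
      ∑ i ∈ S, Real.negMulLog (p i) + ∑ i ∈ Sᶜ, Real.negMulLog (p i) :=
    (Finset.sum_add_sum_compl S _).symm
  -- binEntropy bound
  have hbin : Real.negMulLog b + Real.negMulLog a ≤
      - (ε * Real.log ε) - (1 - ε) * Real.log (1 - ε) := by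
    have h1 : Real.binEntropy b ≤ Real.binEntropy ε := by
      apply le_of_lt
      apply Real.binEntropy_strictMonoOn
      · exact ⟨hb0, by nlinarith⟩
      · exact ⟨by linarith, by nlinarith⟩
      · exact hbε
    rw [Real.binEntropy_eq_negMulLog_add_negMulLog_one_sub,
      Real.binEntropy_eq_negMulLog_add_negMulLog_one_sub] at h1
    have haeq : a = 1 - b := by linarith
    rw [haeq]
    simp only [Real.negMulLog] at h1 ⊢
    linarith
  have ht1 : a * Real.log S.card ≤ Real.log S.card :=
    mul_le_of_le_one_left hlogS (by linarith)
  have ht2 : b * Real.log (Sᶜ.card) ≤ ε * Real.log (Fintype.card ι) := by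
    calc b * Real.log (Sᶜ.card) ≤ ε * Real.log (Sᶜ.card) :=
          mul_le_mul_of_nonneg_right (le_of_lt hbε) hlogSc
      _ ≤ ε * Real.log (Fintype.card ι) :=
          mul_le_mul_of_nonneg_left hlogle (le_of_lt hε0)
  rw [hScard]
  calc ∑ i, Real.negMulLog (p i)
      = ∑ i ∈ S, Real.negMulLog (p i) + ∑ i ∈ Sᶜ, Real.negMulLog (p i) := hsplit
    _ ≤ (Real.negMulLog a + a * Real.log S.card)
        + (Real.negMulLog b + b * Real.log (Sᶜ.card)) := add_le_add hS hSc
    _ ≤ Real.log S.card + ε * Real.log (Fintype.card ι)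
        + (Real.negMulLog b + Real.negMulLog a) := by linarith
    _ ≤ Real.log S.card + ε * Real.log (Fintype.card ι)
        + (- (ε * Real.log ε) - (1 - ε) * Real.log (1 - ε)) := by linarith
    _ = Real.log S.card + ε * Real.log (Fintype.card ι)
        - ε * Real.log ε - (1 - ε) * Real.log (1 - ε) := by ring
end
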